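/- Let μ = (μ₁, μ₂, μ₃) ∈ ℝ³, and define K₁₂ = (μ₁+μ₂)μ₃ − μ₁μ₂, K₁₃ = (μ₁+μ₃)μ₂ − μ₁μ₃, K₂₃ = (μ₂+μ₃)μ₁ − μ₂μ₃. Suppose σ = (σ₁, σ₂, σ₃) ∈ ℝ³ is nonzero and satisfies K_{ij}·(σ_j e_i − σ_i e_j) = 0 in ℝ³ for every pair i < j. Then K₁₂ = K₁₃ = K₂₃ = 0. -/
import Mathlib



lemma flat_aux (a b c : ℝ) (h1 : (a + b) * c = a * b) (h2 : b * (a + c) = a * c) :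
    a * (b + c) = b * c := by
  have ha : a * (c - b) = 0 := by nlinarith
  rcases mul_eq_zero.1 ha with h | h
  · subst h; linear_combination -h1
  · have hb : b = 0 := by
      have hbb : b * b = 0 := by linear_combination h1 - (a + b) * h
      exact mul_self_eq_zero.1 hbb
    have hc : c = 0 := by linarith
    rw [hb, hc]; ring

/-- If a nonzero `σ ∈ ℝ³` satisfies `K_{ij}·(σ_j e_i − σ_i e_j) = 0` for every pair `i < j`,
where `K_{ij} = (μ_i+μ_j)μ_k − μ_iμ_j` are the principal sectional curvatures, then
`K₁₂ = K₁₃ = K₂₃ = 0`; i.e. a flat invariant vector field forces the metric to be flat. -/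
theorem flat_section_implies_flat (μ σ : Fin 3 → ℝ) (hσ : σ ≠ 0)
    (h12 : ((μ 0 + μ 1) * μ 2 - μ 0 * μ 1) •
        (σ 1 • (Pi.single 0 1 : Fin 3 → ℝ) - σ 0 • (Pi.single 1 1 : Fin 3 → ℝ)) = 0)
    (h13 : ((μ 0 + μ 2) * μ 1 - μ 0 * μ 2) •
        (σ 2 • (Pi.single 0 1 : Fin 3 → ℝ) - σ 0 • (Pi.single 2 1 : Fin 3 → ℝ)) = 0)
    (h23 : ((μ 1 + μ 2) * μ 0 - μ 1 * μ 2) •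
        (σ 2 • (Pi.single 1 1 : Fin 3 → ℝ) - σ 1 • (Pi.single 2 1 : Fin 3 → ℝ)) = 0) :
    (μ 0 + μ 1) * μ 2 - μ 0 * μ 1 = 0 ∧
    (μ 0 + μ 2) * μ 1 - μ 0 * μ 2 = 0 ∧
    (μ 1 + μ 2) * μ 0 - μ 1 * μ 2 = 0 := by
  have a12 := congrFun h12 0
  have b12 := congrFun h12 1
  have a13 := congrFun h13 0
  have b13 := congrFun h13 2
  have a23 := congrFun h23 1
  have b23 := congrFun h23 2
  simp [Pi.single_apply, mul_comm, sub_eq_zero] at a12 b12 a13 b13 a23 b23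
  -- each is of form K * σ_i = 0 maybe after simp; inspect
  have hσ' : σ 0 ≠ 0 ∨ σ 1 ≠ 0 ∨ σ 2 ≠ 0 := by
    by_contra h
    push_neg at h
    apply hσ
    funext i
    fin_cases i <;> simp [h.1, h.2.1, h.2.2]
  rcases hσ' with h | h | h
  · rcases b12 with h' | e1; · exact absurd h' h
    rcases b13 with h' | e2; · exact absurd h' h
    refine ⟨by linarith, by linarith, ?_⟩
    have := flat_aux (μ 0) (μ 1) (μ 2) (by linarith) (by linarith)
    linarith
  · rcases a12 with h' | e1; · exact absurd h' h
    rcases b23 with h' | e2; · exact absurd h' h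
    refine ⟨by linarith, ?_, by linarith⟩
    have := flat_aux (μ 1) (μ 0) (μ 2) (by linarith) (by linarith)
    linarith
  · rcases a13 with h' | e1; · exact absurd h' h
    rcases a23 with h' | e2; · exact absurd h' h
    refine ⟨?_, by linarith, by linarith⟩
    have := flat_aux (μ 2) (μ 0) (μ 1) (by nlinarith) (by nlinarith)
    nlinarith
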